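/- For the spherical catenoid M_a in H³ with a > 1/2, parametrized so that the induced metric is I = ds² + (a cosh 2s - 1/2) dt², with |A|² = 2(a² - 1/4)/(a cosh 2s - 1/2)² and dv = (a cosh 2s - 1/2)^{1/2} ds dt with 0 ≤ t ≤ 2π, the total curvature is finite: ∫_{M_a} |A|² dv = 8π(a² - 1/4) ∫₀^∞ (a cosh 2s - 1/2)^{-3/2} ds < ∞. -/

import Mathlib

open Real MeasureTheory

lemma catenoid_pos (a : ℝ) (ha : 1/2 < a) (s : ℝ) :
    0 < a * Real.cosh (2*s) - 1/2 := by
  have h1 : (1:ℝ) ≤ Real.cosh (2*s) := Real.one_le_cosh _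
  nlinarith

lemma catenoid_integrable (a : ℝ) (ha : 1/2 < a) :
    IntegrableOn (fun s : ℝ => (a * Real.cosh (2*s) - 1/2) ^ (-(3:ℝ)/2))
      (Set.Ioi (0:ℝ)) := by
  have hDpos := catenoid_pos a ha
  have hcont : Continuous fun s : ℝ => (a * Real.cosh (2*s) - 1/2) ^ (-(3:ℝ)/2) := by
    apply Continuous.rpow_const
    · continuity
    · intro x; exact Or.inl (hDpos x).ne'
  have hC : (0:ℝ) < (a - 1/2)/2 := by linarith
  refine Integrable.mono' (g := fun s => ((a - 1/2)/2) ^ (-(3:ℝ)/2) * Real.exp (-(3:ℝ) * s))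
    ((exp_neg_integrableOn_Ioi 0 (by norm_num : (0:ℝ) < 3)).const_mul _)
    (hcont.aestronglyMeasurable.restrict) ?_
  filter_upwards [ae_restrict_mem measurableSet_Ioi] with s _
  have hD := hDpos s
  have hge : (a - 1/2)/2 * Real.exp (2*s) ≤ a * Real.cosh (2*s) - 1/2 := by
    have h1 : (1:ℝ) ≤ Real.cosh (2*s) := Real.one_le_cosh _
    have h2 : Real.cosh (2*s) = (Real.exp (2*s) + Real.exp (-(2*s)))/2 := Real.cosh_eq _
    have h3 : 0 < Real.exp (-(2*s)) := Real.exp_pos _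
    nlinarith
  have hpos2 : 0 < (a - 1/2)/2 * Real.exp (2*s) := mul_pos hC (Real.exp_pos _)
  rw [Real.norm_eq_abs, abs_of_nonneg (Real.rpow_nonneg hD.le _)]
  calc (a * Real.cosh (2*s) - 1/2) ^ (-(3:ℝ)/2)
      ≤ ((a - 1/2)/2 * Real.exp (2*s)) ^ (-(3:ℝ)/2) :=
        Real.rpow_le_rpow_of_nonpos hpos2 hge (by norm_num)
    _ = ((a - 1/2)/2) ^ (-(3:ℝ)/2) * Real.exp (-(3:ℝ) * s) := by
        rw [Real.mul_rpow hC.le (Real.exp_pos _).le, ← Real.exp_mul]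
        ring_nf

theorem stmt_11 (a : ℝ) (ha : 1/2 < a) :
    (∫ s : ℝ, ∫ t in Set.Icc (0:ℝ) (2*π),
        (2 * (a^2 - 1/4) / (a * Real.cosh (2*s) - 1/2)^2)
          * (a * Real.cosh (2*s) - 1/2) ^ ((1:ℝ)/2))
      = 8 * π * (a^2 - 1/4)
          * ∫ s in Set.Ioi (0:ℝ), (a * Real.cosh (2*s) - 1/2) ^ (-(3:ℝ)/2) ∧
    IntegrableOn (fun s : ℝ => (a * Real.cosh (2*s) - 1/2) ^ (-(3:ℝ)/2))
      (Set.Ioi (0:ℝ)) := by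
  refine ⟨?_, catenoid_integrable a ha⟩
  have hDpos := catenoid_pos a ha
  have key : ∀ s : ℝ,
      (∫ t in Set.Icc (0:ℝ) (2*π),
        (2 * (a^2 - 1/4) / (a * Real.cosh (2*s) - 1/2)^2)
          * (a * Real.cosh (2*s) - 1/2) ^ ((1:ℝ)/2))
      = (4 * π * (a^2 - 1/4)) * (a * Real.cosh (2*s) - 1/2) ^ (-(3:ℝ)/2) := by
    intro s
    set D := a * Real.cosh (2*s) - 1/2 with hDdef
    have hD : 0 < D := hDpos s
    rw [setIntegral_const, Real.volume_real_Icc_of_le (by nlinarith [Real.pi_pos] : (0:ℝ) ≤ 2*π),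
      smul_eq_mul]
    have hsimp : 2 * (a^2 - 1/4) / D^2 * D ^ ((1:ℝ)/2)
        = 2 * (a^2 - 1/4) * D ^ (-(3:ℝ)/2) := by
      rw [div_mul_eq_mul_div, mul_div_assoc]
      congr 1
      rw [← Real.rpow_natCast D 2, ← Real.rpow_sub hD]
      norm_num
    rw [hsimp]; ring
  simp only [key]
  rw [integral_const_mul]
  have heven : (∫ s : ℝ, (a * Real.cosh (2*s) - 1/2) ^ (-(3:ℝ)/2))
      = 2 * ∫ s in Set.Ioi (0:ℝ), (a * Real.cosh (2*s) - 1/2) ^ (-(3:ℝ)/2) := by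
    rw [← integral_comp_abs
      (f := fun s => (a * Real.cosh (2*s) - 1/2) ^ (-(3:ℝ)/2))]
    congr 1
    ext s
    rw [show (2:ℝ) * |s| = |2*s| by rw [abs_mul, abs_two], Real.cosh_abs]
  rw [heven]; ring
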